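/- Let X be a normed space over ℂ, let u ∈ X with ‖u‖ = 1, let k ≥ 1, and let x_{ij} ∈ X for 1 ≤ i, j ≤ k. Suppose that sup{‖(f(x_{ij}))_{i,j}‖ : f ∈ X*, ‖f‖ ≤ 1} = 1, where (f(x_{ij}))_{i,j} ∈ M_k(ℂ) carries the operator norm on Euclidean ℂ^k. Then n(X;u) ≤ sup{‖(f(x_{ij}))_{i,j}‖ : f ∈ S(X;u)}. -/

import Mathlib

/-- `S(X;u)`: the set of norm-one continuous linear functionals attaining value `1` at `u`. -/
def geomStates {X : Type*} [NormedAddCommGroup X] [NormedSpace ℂ X] (u : X) :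
    Set (X →L[ℂ] ℂ) :=
  {f | ‖f‖ = 1 ∧ f u = 1}

/-- `γ^u(x) = sup {|f(x)| : f ∈ S(X;u)}`. -/
noncomputable def geomGamma {X : Type*} [NormedAddCommGroup X] [NormedSpace ℂ X]
    (u x : X) : ℝ :=
  sSup {r : ℝ | ∃ f ∈ geomStates u, r = ‖f x‖}

/-- `n(X;u) = inf {γ^u(x) : ‖x‖ = 1}`. -/
noncomputable def geomN {X : Type*} [NormedAddCommGroup X] [NormedSpace ℂ X] (u : X) : ℝ :=
  sInf {r : ℝ | ∃ x : X, ‖x‖ = 1 ∧ r = geomGamma u x}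

/-- The operator norm of a complex matrix, as a linear map on Euclidean space. -/
noncomputable def matOpNorm {m n : Type*} [Fintype m] [Fintype n] [DecidableEq n]
    (M : Matrix m n ℂ) : ℝ :=
  ‖LinearMap.toContinuousLinearMap (Matrix.toEuclideanLin M)‖


open scoped ComplexConjugate

noncomputable def matCLM {X : Type*} [NormedAddCommGroup X] [NormedSpace ℂ X] {k : ℕ}
    (x : Fin k → Fin k → X) (g : X →L[ℂ] ℂ) :
    EuclideanSpace ℂ (Fin k) →L[ℂ] EuclideanSpace ℂ (Fin k) :=
  LinearMap.toContinuousLinearMap (Matrix.toEuclideanLin (Matrix.of fun i j => g (x i j)))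

lemma matCLM_norm {X : Type*} [NormedAddCommGroup X] [NormedSpace ℂ X] {k : ℕ}
    (x : Fin k → Fin k → X) (g : X →L[ℂ] ℂ) :
    ‖matCLM x g‖ = matOpNorm (Matrix.of fun i j => g (x i j)) := rfl

lemma inner_matCLM {X : Type*} [NormedAddCommGroup X] [NormedSpace ℂ X] {k : ℕ}
    (x : Fin k → Fin k → X) (g : X →L[ℂ] ℂ) (a b : EuclideanSpace ℂ (Fin k)) :
    inner ℂ a (matCLM x g b) =
      g (∑ i, ∑ j, (conj (a i) * b j) • x i j) := by
  simp only [map_sum, map_smul, smul_eq_mul]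
  simp only [matCLM, LinearMap.coe_toContinuousLinearMap', Matrix.toEuclideanLin_apply,
    PiLp.inner_apply, RCLike.inner_apply]
  simp only [Matrix.mulVec, dotProduct,
    Matrix.of_apply, Finset.mul_sum, Finset.sum_mul]
  refine Finset.sum_congr rfl fun i _ => Finset.sum_congr rfl fun j _ => by ring

lemma euclid_coord_le {k : ℕ} (v : EuclideanSpace ℂ (Fin k)) (j : Fin k) : ‖v j‖ ≤ ‖v‖ := by
  rw [EuclideanSpace.norm_eq]
  rw [show ‖v j‖ = Real.sqrt (‖v j‖ ^ 2) from (Real.sqrt_sq (norm_nonneg _)).symm]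
  exact Real.sqrt_le_sqrt (Finset.single_le_sum (f := fun i => ‖v i‖ ^ 2)
    (fun i _ => sq_nonneg _) (Finset.mem_univ j))

lemma matCLM_norm_le {X : Type*} [NormedAddCommGroup X] [NormedSpace ℂ X] {k : ℕ}
    (x : Fin k → Fin k → X) (g : X →L[ℂ] ℂ) :
    ‖matCLM x g‖ ≤ Real.sqrt (∑ i, (∑ j, ‖g (x i j)‖) ^ 2) := by
  refine ContinuousLinearMap.opNorm_le_bound _ (Real.sqrt_nonneg _) fun v => ?_
  have hcoord : ∀ i, ‖matCLM x g v i‖ ≤ (∑ j, ‖g (x i j)‖) * ‖v‖ := by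
    intro i
    have : matCLM x g v i = ∑ j, g (x i j) * v j := by
      simp [matCLM, Matrix.toEuclideanLin_apply, Matrix.mulVec, dotProduct]
    rw [this, Finset.sum_mul]
    refine (norm_sum_le _ _).trans (Finset.sum_le_sum fun j _ => ?_)
    rw [norm_mul]
    exact mul_le_mul_of_nonneg_left (euclid_coord_le v j) (norm_nonneg _)
  rw [EuclideanSpace.norm_eq]
  calc Real.sqrt (∑ i, ‖matCLM x g v i‖ ^ 2)
      ≤ Real.sqrt (∑ i, ((∑ j, ‖g (x i j)‖) * ‖v‖) ^ 2) := by
        refine Real.sqrt_le_sqrt (Finset.sum_le_sum fun i _ => ?_)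
        exact pow_le_pow_left₀ (norm_nonneg _) (hcoord i) 2
    _ = Real.sqrt (∑ i, (∑ j, ‖g (x i j)‖) ^ 2) * ‖v‖ := by
        have h2 : ∑ i, ((∑ j, ‖g (x i j)‖) * ‖v‖) ^ 2
            = (∑ i, (∑ j, ‖g (x i j)‖) ^ 2) * ‖v‖ ^ 2 := by
          rw [Finset.sum_mul]; exact Finset.sum_congr rfl fun i _ => by ring
        rw [h2, Real.sqrt_mul (by positivity), Real.sqrt_sq (norm_nonneg v)]

lemma norm_coe_inv_smul {E : Type*} [NormedAddCommGroup E] [NormedSpace ℂ E]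
    (v : E) (hv : 0 < ‖v‖) : ‖((‖v‖⁻¹ : ℝ) : ℂ) • v‖ = 1 := by
  rw [norm_smul]
  simp [abs_of_nonneg (inv_nonneg.mpr hv.le), inv_mul_cancel₀ hv.ne']

theorem geomN_le_sSup_norm_matrix_states
    {X : Type*} [NormedAddCommGroup X] [NormedSpace ℂ X]
    (u : X) (hu : ‖u‖ = 1) (k : ℕ) (hk : 1 ≤ k) (x : Fin k → Fin k → X)
    (hx : sSup {r : ℝ | ∃ f : X →L[ℂ] ℂ, ‖f‖ ≤ 1 ∧
        r = matOpNorm (Matrix.of fun i j => f (x i j))} = 1) :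
    geomN u ≤
      sSup {r : ℝ | ∃ f ∈ geomStates u,
        r = matOpNorm (Matrix.of fun i j => f (x i j))} := by

  set Sset : Set ℝ := {r : ℝ | ∃ f ∈ geomStates u,
      r = matOpNorm (Matrix.of fun i j => f (x i j))} with hSset
  set S := sSup Sset with hSdef
  have hu0 : u ≠ 0 := by intro h; rw [h, norm_zero] at hu; norm_num at hu
  obtain ⟨g₀, hg₀n, hg₀u⟩ := exists_dual_vector ℂ u (norm_ne_zero_iff.mpr hu0)
  have hg₀ : g₀ ∈ geomStates u := ⟨hg₀n, by rw [hg₀u, hu]; norm_num⟩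
  have hbound : ∀ g : X →L[ℂ] ℂ, ‖g‖ ≤ 1 →
      matOpNorm (Matrix.of fun i j => g (x i j)) ≤ Real.sqrt (∑ i, (∑ j, ‖x i j‖) ^ 2) := by
    intro g hg
    rw [← matCLM_norm]
    refine (matCLM_norm_le x g).trans (Real.sqrt_le_sqrt (Finset.sum_le_sum fun i _ => ?_))
    refine pow_le_pow_left₀ (by positivity) (Finset.sum_le_sum fun j _ => ?_) 2
    calc ‖g (x i j)‖ ≤ ‖g‖ * ‖x i j‖ := g.le_opNorm _
      _ ≤ 1 * ‖x i j‖ := mul_le_mul_of_nonneg_right hg (norm_nonneg _)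
      _ = ‖x i j‖ := one_mul _
  have hbddS : BddAbove Sset := ⟨Real.sqrt (∑ i, (∑ j, ‖x i j‖) ^ 2), by rintro r ⟨f, hf, rfl⟩; exact hbound f (le_of_eq hf.1)⟩
  have hS0 : (0 : ℝ) ≤ S := by
    refine le_trans ?_ (le_csSup hbddS ⟨g₀, hg₀, rfl⟩)
    unfold matOpNorm; exact norm_nonneg _
  have main : ∀ ε : ℝ, 0 < ε → ε < 1 → geomN u ≤ S / (1 - ε) := by
    intro ε hε0 hε1
    have hex : ∃ f : X →L[ℂ] ℂ, ‖f‖ ≤ 1 ∧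
        1 - ε / 2 < matOpNorm (Matrix.of fun i j => f (x i j)) := by
      by_contra h
      push_neg at h
      have hle : sSup {r : ℝ | ∃ f : X →L[ℂ] ℂ, ‖f‖ ≤ 1 ∧
          r = matOpNorm (Matrix.of fun i j => f (x i j))} ≤ 1 - ε / 2 := by
        refine Real.sSup_le ?_ (by linarith)
        rintro r ⟨f, hf1, rfl⟩
        exact h f hf1
      rw [hx] at hle
      linarith
    obtain ⟨f, hf1, hfbig⟩ := hex
    set T := matCLM x f with hTdef
    have hT : 1 - ε < ‖T‖ := by rw [hTdef, matCLM_norm]; linarith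
    have hvex : ∃ v : EuclideanSpace ℂ (Fin k), (1 - ε) * ‖v‖ < ‖T v‖ := by
      by_contra h
      push_neg at h
      exact absurd (ContinuousLinearMap.opNorm_le_bound T (by linarith)
        (fun v => (h v))) (not_le.mpr hT)
    obtain ⟨v, hv⟩ := hvex
    have hvn : 0 < ‖v‖ := by
      rcases eq_or_ne v 0 with rfl | hne
      · simp at hv
      · exact norm_pos_iff.mpr hne
    set b : EuclideanSpace ℂ (Fin k) := ((‖v‖⁻¹ : ℝ) : ℂ) • v with hbdef
    have hbn : ‖b‖ = 1 := norm_coe_inv_smul v hvn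
    have hTb : 1 - ε < ‖T b‖ := by
      rw [hbdef, map_smul, norm_smul]
      have h1 : ‖((‖v‖⁻¹ : ℝ) : ℂ)‖ = ‖v‖⁻¹ := by
        simp [abs_of_nonneg (inv_nonneg.mpr hvn.le)]
      rw [h1]
      calc 1 - ε = ‖v‖⁻¹ * ((1 - ε) * ‖v‖) := by field_simp
        _ < ‖v‖⁻¹ * ‖T v‖ := by
            exact mul_lt_mul_of_pos_left hv (inv_pos.mpr hvn)
    set w := T b with hwdef
    have hw0 : 0 < ‖w‖ := by linarith
    set a : EuclideanSpace ℂ (Fin k) := ((‖w‖⁻¹ : ℝ) : ℂ) • w with hadef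
    have han : ‖a‖ = 1 := norm_coe_inv_smul w hw0
    set y : X := ∑ i, ∑ j, ((starRingEnd ℂ) (a i) * b j) • x i j with hydef
    have hfy : ‖f y‖ = ‖w‖ := by
      have h1 : (inner ℂ a (matCLM x f b) : ℂ) = f y := inner_matCLM x f a b
      rw [← h1, ← hTdef, ← hwdef, hadef, inner_smul_left, inner_self_eq_norm_sq_to_K]
      simp only [Complex.conj_ofReal, norm_mul, norm_pow, Complex.norm_real]
      rw [RCLike.norm_ofReal, Real.norm_eq_abs,
        abs_of_nonneg (inv_nonneg.mpr hw0.le), abs_of_nonneg (norm_nonneg w)]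
      rw [sq, ← mul_assoc, inv_mul_cancel₀ hw0.ne', one_mul]
    have hyn : 1 - ε < ‖y‖ := by
      calc 1 - ε < ‖w‖ := hTb
        _ = ‖f y‖ := hfy.symm
        _ ≤ ‖f‖ * ‖y‖ := f.le_opNorm y
        _ ≤ 1 * ‖y‖ := mul_le_mul_of_nonneg_right hf1 (norm_nonneg _)
        _ = ‖y‖ := one_mul _
    have hy0 : 0 < ‖y‖ := by linarith
    set z : X := ((‖y‖⁻¹ : ℝ) : ℂ) • y with hzdef
    have hzn : ‖z‖ = 1 := norm_coe_inv_smul y hy0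
    have hgz : ∀ g ∈ geomStates u, ‖g z‖ ≤ ‖y‖⁻¹ * S := by
      intro g hg
      have h1 : (inner ℂ a (matCLM x g b) : ℂ) = g y := inner_matCLM x g a b
      have h2 : ‖g y‖ ≤ S := by
        rw [← h1]
        calc ‖(inner ℂ a (matCLM x g b) : ℂ)‖ ≤ ‖a‖ * ‖matCLM x g b‖ := norm_inner_le_norm _ _
          _ = ‖matCLM x g b‖ := by rw [han, one_mul]
          _ ≤ ‖matCLM x g‖ * ‖b‖ := (matCLM x g).le_opNorm b
          _ = ‖matCLM x g‖ := by rw [hbn, mul_one]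
          _ ≤ S := by rw [matCLM_norm]; exact le_csSup hbddS ⟨g, hg, rfl⟩
      have h3 : ‖g z‖ = ‖y‖⁻¹ * ‖g y‖ := by
        rw [hzdef, map_smul, norm_smul, Complex.norm_real, Real.norm_eq_abs,
          abs_of_nonneg (inv_nonneg.mpr hy0.le)]
      rw [h3]
      exact mul_le_mul_of_nonneg_left h2 (inv_nonneg.mpr hy0.le)
    have hgamma : geomGamma u z ≤ S / (1 - ε) := by
      refine Real.sSup_le ?_ (div_nonneg hS0 (by linarith))
      rintro r ⟨g, hg, rfl⟩
      refine (hgz g hg).trans ?_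
      rw [div_eq_inv_mul]
      refine mul_le_mul_of_nonneg_right ?_ hS0
      exact inv_anti₀ (by linarith) hyn.le
    have hbb : BddBelow {r : ℝ | ∃ x' : X, ‖x'‖ = 1 ∧ r = geomGamma u x'} := by
      refine ⟨0, ?_⟩
      rintro r ⟨x', hx', rfl⟩
      refine le_trans (norm_nonneg (g₀ x')) (le_csSup ?_ ⟨g₀, hg₀, rfl⟩)
      refine ⟨‖x'‖, ?_⟩
      rintro r ⟨g, hg, rfl⟩
      calc ‖g x'‖ ≤ ‖g‖ * ‖x'‖ := g.le_opNorm _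
        _ = ‖x'‖ := by rw [hg.1, one_mul]
    exact (csInf_le hbb ⟨z, hzn, rfl⟩).trans hgamma
  by_contra hcon
  push_neg at hcon
  have hN0 : 0 < geomN u := lt_of_le_of_lt hS0 hcon
  set ε := (geomN u - S) / (2 * geomN u) with hεdef
  have hε0 : 0 < ε := div_pos (by linarith) (by linarith)
  have hε1 : ε < 1 := by
    rw [div_lt_one (by linarith)]
    linarith
  have hmain := main ε hε0 hε1
  rw [le_div_iff₀ (by linarith)] at hmain
  have hε : ε * (2 * geomN u) = geomN u - S := by
    rw [hεdef, div_mul_cancel₀ _ (ne_of_gt (by linarith : (0:ℝ) < 2 * geomN u))]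
  nlinarith [hmain, hε, hcon]
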